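/- In the ∀∃-4-Partition reduction from ∀∃-3DM: let A, B, C be sets of size d, M, N ⊆ A×B×C disjoint triplet sets, and construct in base β = 4(|M|+|N|)d + 1 the multiset W containing, for each triplet t=(a_i,b_j,c_k) ∈ M∪N, the integer ⟨1,1,−i,−j,−k,0⟩; for each a_i one 'actual' integer ⟨1,2,i,0,0,−2⟩ and #a_i − 1 'dummy' integers ⟨1,2,i,0,0,0⟩; analogously integers ⟨1,4,0,j,0,+1⟩ (actual) / ⟨1,4,0,j,0,0⟩ (dummy) for b_j and ⟨1,8,0,0,k,+1⟩ / ⟨1,8,0,0,k,0⟩ for c_k; with target θ = ⟨4,15,0,0,0,0⟩. Then in any partition of W into subsets each summing to θ, every subset consists of exactly one triplet-integer w(a_i,b_j,c_k) together with one a-integer for a_i, one b-integer for b_j and one c-integer for c_k, and the three element-integers in a subset are either all actual or contain no actual ones in a way that the actual a, b, c integers for the elements of a triplet appear together exactly when that triplet is in the induced 3-dimensional matching. -/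
import Mathlib

set_option maxHeartbeats 1000000


open scoped Classical
open Finset

/-- Number of triplets of `M ∪ N` containing `a` in first position. -/
noncomputable def occA (d : ℕ) (M N : Finset (Fin d × Fin d × Fin d)) (a : Fin d) : ℕ :=
  ((M ∪ N).filter (fun t => t.1 = a)).card

/-- Number of triplets of `M ∪ N` containing `b` in second position. -/
noncomputable def occB (d : ℕ) (M N : Finset (Fin d × Fin d × Fin d)) (b : Fin d) : ℕ :=
  ((M ∪ N).filter (fun t => t.2.1 = b)).card

/-- Number of triplets of `M ∪ N` containing `c` in third position. -/
noncomputable def occC (d : ℕ) (M N : Finset (Fin d × Fin d × Fin d)) (c : Fin d) : ℕ :=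
  ((M ∪ N).filter (fun t => t.2.2 = c)).card

/-- Index set for the multiset `W`: one triplet-integer per triplet of `M ∪ N`, and for
each element `a` (resp. `b`, `c`) as many integers as occurrences, the `0`-th one being
the unique *actual* integer, the others being *dummies*. -/
abbrev Idx12 (d : ℕ) (M N : Finset (Fin d × Fin d × Fin d)) :=
  {t : Fin d × Fin d × Fin d // t ∈ M ∪ N} ⊕
    ((Σ a : Fin d, Fin (occA d M N a)) ⊕
      ((Σ b : Fin d, Fin (occB d M N b)) ⊕ (Σ c : Fin d, Fin (occC d M N c))))

/-- The base `β = 4(|M| + |N|)d + 1`. -/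
def bb (d : ℕ) (M N : Finset (Fin d × Fin d × Fin d)) : ℕ :=
  4 * (M.card + N.card) * d + 1

/-- The integers of `W`, written in base `β`: triplet-integer `⟨1,1,−i,−j,−k,0⟩`,
`a`-integers `⟨1,2,i,0,0,−2 or 0⟩`, `b`-integers `⟨1,4,0,j,0,+1 or 0⟩`,
`c`-integers `⟨1,8,0,0,k,+1 or 0⟩` (elements identified with `1,…,d`). -/
noncomputable def wt (d : ℕ) (M N : Finset (Fin d × Fin d × Fin d)) :
    Idx12 d M N → ℤ
  | Sum.inl t =>
      (bb d M N : ℤ) ^ 5 + (bb d M N : ℤ) ^ 4 - ((t.1.1 : ℤ) + 1) * (bb d M N : ℤ) ^ 3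
        - ((t.1.2.1 : ℤ) + 1) * (bb d M N : ℤ) ^ 2 - ((t.1.2.2 : ℤ) + 1) * (bb d M N : ℤ)
  | Sum.inr (Sum.inl x) =>
      (bb d M N : ℤ) ^ 5 + 2 * (bb d M N : ℤ) ^ 4 + ((x.1 : ℤ) + 1) * (bb d M N : ℤ) ^ 3
        + (if (x.2 : ℕ) = 0 then -2 else 0)
  | Sum.inr (Sum.inr (Sum.inl y)) =>
      (bb d M N : ℤ) ^ 5 + 4 * (bb d M N : ℤ) ^ 4 + ((y.1 : ℤ) + 1) * (bb d M N : ℤ) ^ 2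
        + (if (y.2 : ℕ) = 0 then 1 else 0)
  | Sum.inr (Sum.inr (Sum.inr z)) =>
      (bb d M N : ℤ) ^ 5 + 8 * (bb d M N : ℤ) ^ 4 + ((z.1 : ℤ) + 1) * (bb d M N : ℤ)
        + (if (z.2 : ℕ) = 0 then 1 else 0)

/-- The target `θ = ⟨4,15,0,0,0,0⟩`. -/
noncomputable def θ12 (d : ℕ) (M N : Finset (Fin d × Fin d × Fin d)) : ℤ :=
  4 * (bb d M N : ℤ) ^ 5 + 15 * (bb d M N : ℤ) ^ 4

/-- A class `kk` of the partition `f` contains only *actual* element-integers. -/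
def AllActual {d : ℕ} {M N : Finset (Fin d × Fin d × Fin d)} {K : Type}
    (f : Idx12 d M N → K) (kk : K) : Prop :=
  (∀ x : Σ a : Fin d, Fin (occA d M N a), f (Sum.inr (Sum.inl x)) = kk → (x.2 : ℕ) = 0) ∧
  (∀ y : Σ b : Fin d, Fin (occB d M N b),
      f (Sum.inr (Sum.inr (Sum.inl y))) = kk → (y.2 : ℕ) = 0) ∧
  (∀ z : Σ c : Fin d, Fin (occC d M N c),
      f (Sum.inr (Sum.inr (Sum.inr z))) = kk → (z.2 : ℕ) = 0)


section AUX

lemma peel12 {B y : ℤ} {n : ℕ} (x : ℤ) (hy : |y| < B ^ n) (h : x * B ^ n + y = 0) :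
    x = 0 ∧ y = 0 := by
  have hpos : 0 < B ^ n := lt_of_le_of_lt (abs_nonneg y) hy
  have hdvd : B ^ n ∣ y := ⟨-x, by linarith⟩
  have hy0 : y = 0 := Int.eq_zero_of_abs_lt_dvd hdvd hy
  refine ⟨?_, hy0⟩
  have hx : x * B ^ n = 0 := by linarith
  exact (mul_eq_zero.mp hx).resolve_right (by positivity)

lemma digits12 (B c5 c4 c3 c2 c1 c0 : ℤ) (hB : 2 ≤ B)
    (h3 : |c3| < B) (h2 : |c2| < B) (h1 : |c1| < B) (h0 : |c0| < B)
    (h : c5 * B ^ 5 + c4 * B ^ 4 + c3 * B ^ 3 + c2 * B ^ 2 + c1 * B + c0 = 0) :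
    c5 * B + c4 = 0 ∧ c3 = 0 ∧ c2 = 0 ∧ c1 = 0 ∧ c0 = 0 := by
  have b3 : |c3| ≤ B - 1 := by omega
  have b2 : |c2| ≤ B - 1 := by omega
  have b1 : |c1| ≤ B - 1 := by omega
  have key : ∀ (k : ℕ) (c r : ℤ), |c| ≤ B - 1 → |r| < B ^ k → |c * B ^ k + r| < B ^ (k + 1) := by
    intro k c r hc hr
    have hpk : (0:ℤ) < B ^ k := lt_of_le_of_lt (abs_nonneg r) hr
    calc |c * B ^ k + r| ≤ |c| * B ^ k + |r| := by
          refine le_trans (abs_add_le _ _) ?_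
          rw [abs_mul, abs_of_pos hpk]
      _ < (B - 1) * B ^ k + B ^ k := by
          have := mul_le_mul_of_nonneg_right hc (le_of_lt hpk)
          linarith
      _ = B ^ (k + 1) := by ring
  have k1 : |c1 * B ^ 1 + c0| < B ^ 2 := key 1 c1 c0 b1 (by simpa using h0)
  have k2 : |c2 * B ^ 2 + (c1 * B ^ 1 + c0)| < B ^ 3 := key 2 c2 _ b2 k1
  have k3 : |c3 * B ^ 3 + (c2 * B ^ 2 + (c1 * B ^ 1 + c0))| < B ^ 4 := key 3 c3 _ b3 k2
  obtain ⟨h54, hrest⟩ := peel12 (c5 * B + c4) k3 (by ring_nf; ring_nf at h; linarith)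
  obtain ⟨hc3, hrest⟩ := peel12 c3 k2 hrest
  obtain ⟨hc2, hrest⟩ := peel12 c2 k1 hrest
  obtain ⟨hc1, hc0⟩ := peel12 c1 (by simpa using h0) hrest
  exact ⟨h54, hc3, hc2, hc1, by simpa using hc0⟩

lemma arith12 (m e nt na nb nc : ℕ)
    (hnt : nt ≤ m) (hna : na ≤ m) (hnb : nb ≤ m) (hnc : nc ≤ m) (hme : m ≤ e)
    (heq : ((nt:ℤ) + na + nb + nc - 4) * (4 * (e:ℤ) + 1)
      + ((nt:ℤ) + 2 * na + 4 * nb + 8 * nc - 15) = 0) :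
    nt = 1 ∧ na = 1 ∧ nb = 1 ∧ nc = 1 := by
  rcases lt_trichotomy (nt + na + nb + nc) 4 with hP | hP | hP
  · have h1 : (1:ℤ) ≤ 4 - ((nt:ℤ) + na + nb + nc) := by omega
    have hP3 : ((nt:ℤ) + na + nb + nc) ≤ 3 := by omega
    have hbig : (4 * (e:ℤ) + 1) ≤ (4 - ((nt:ℤ) + na + nb + nc)) * (4 * e + 1) := by
      have hpos : (0:ℤ) < 4 * (e:ℤ) + 1 := by positivity
      nlinarith
    have hQ : ((nt:ℤ) + 2 * na + 4 * nb + 8 * nc) ≤ 8 * ((nt:ℤ) + na + nb + nc) := by omega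
    have he2 : e ≤ 2 := by
      have : (e:ℤ) ≤ 2 := by linarith
      exact_mod_cast this
    interval_cases e <;> omega
  · have h0 : ((nt:ℤ) + na + nb + nc - 4) = 0 := by omega
    rw [h0, zero_mul, zero_add] at heq
    omega
  · have h1 : (1:ℤ) ≤ ((nt:ℤ) + na + nb + nc) - 4 := by omega
    have hbig : (4 * (e:ℤ) + 1) ≤ (((nt:ℤ) + na + nb + nc) - 4) * (4 * e + 1) := by
      have hpos : (0:ℤ) < 4 * (e:ℤ) + 1 := by positivity
      nlinarith
    have hQ : ((nt:ℤ) + na + nb + nc) ≤ ((nt:ℤ) + 2 * na + 4 * nb + 8 * nc) := by omega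
    have he2 : e ≤ 2 := by
      have : (e:ℤ) ≤ 2 := by linarith
      exact_mod_cast this
    interval_cases e <;> omega

lemma sigEq12 {d : ℕ} (g : Fin d → ℕ) {a a' : Fin d} (j : Fin (g a)) (j' : Fin (g a'))
    (h : a = a') (hj : (j : ℕ) = (j' : ℕ)) : (⟨a, j⟩ : Σ a, Fin (g a)) = ⟨a', j'⟩ := by
  subst h
  exact congrArg _ (Fin.ext hj)

end AUX

lemma class12 (d : ℕ) (hd : 0 < d) (M N : Finset (Fin d × Fin d × Fin d))
    {K : Type} (f : Idx12 d M N → K)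
    (hpart : ∀ kk ∈ Set.range f,
      ∑ x ∈ univ.filter (fun x => f x = kk), wt d M N x = θ12 d M N)
    (kk : K) (hk : kk ∈ Set.range f) :
    ∃ (t : {t : Fin d × Fin d × Fin d // t ∈ M ∪ N})
      (ja : Fin (occA d M N t.1.1)) (jb : Fin (occB d M N t.1.2.1))
      (jc : Fin (occC d M N t.1.2.2)),
      f (Sum.inl t) = kk ∧ (∀ t', f (Sum.inl t') = kk → t' = t) ∧
      f (Sum.inr (Sum.inl ⟨t.1.1, ja⟩)) = kk ∧
      (∀ x, f (Sum.inr (Sum.inl x)) = kk → x = ⟨t.1.1, ja⟩) ∧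
      f (Sum.inr (Sum.inr (Sum.inl ⟨t.1.2.1, jb⟩))) = kk ∧
      (∀ y, f (Sum.inr (Sum.inr (Sum.inl y))) = kk → y = ⟨t.1.2.1, jb⟩) ∧
      f (Sum.inr (Sum.inr (Sum.inr ⟨t.1.2.2, jc⟩))) = kk ∧
      (∀ z, f (Sum.inr (Sum.inr (Sum.inr z))) = kk → z = ⟨t.1.2.2, jc⟩) ∧
      (((ja : ℕ) = 0 ∧ (jb : ℕ) = 0 ∧ (jc : ℕ) = 0) ∨
        ((ja : ℕ) ≠ 0 ∧ (jb : ℕ) ≠ 0 ∧ (jc : ℕ) ≠ 0)) := by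
  classical
  obtain ⟨x0, hx0⟩ := hk
  -- `M ∪ N` is nonempty
  have hunion : 0 < (M ∪ N).card := by
    rcases x0 with t | (x | (y | z))
    · exact Finset.card_pos.mpr ⟨t.1, t.2⟩
    · exact lt_of_lt_of_le x.2.pos (Finset.card_filter_le _ _)
    · exact lt_of_lt_of_le y.2.pos (Finset.card_filter_le _ _)
    · exact lt_of_lt_of_le z.2.pos (Finset.card_filter_le _ _)
  have hm1 : 1 ≤ M.card + N.card := lt_of_lt_of_le hunion (Finset.card_union_le M N)
  have hme : M.card + N.card ≤ (M.card + N.card) * d :=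
    Nat.le_mul_of_pos_right _ hd
  have he1 : 1 ≤ (M.card + N.card) * d := le_trans hm1 hme
  have hBe : (bb d M N : ℤ) = 4 * (((M.card + N.card) * d : ℕ) : ℤ) + 1 := by
    unfold bb; push_cast; ring
  have hB2 : (2:ℤ) ≤ (bb d M N : ℤ) := by
    rw [hBe]
    have : (1:ℤ) ≤ (((M.card + N.card) * d : ℕ) : ℤ) := by exact_mod_cast he1
    linarith
  have hsum := hpart kk ⟨x0, hx0⟩
  -- split the class sum into the four kinds
  have hsplit : ∑ x ∈ univ.filter (fun x => f x = kk), wt d M N x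
      = (∑ t ∈ univ.filter (fun t : {t : Fin d × Fin d × Fin d // t ∈ M ∪ N} =>
            f (Sum.inl t) = kk), wt d M N (Sum.inl t))
        + ((∑ x ∈ univ.filter (fun x : Σ a : Fin d, Fin (occA d M N a) =>
              f (Sum.inr (Sum.inl x)) = kk), wt d M N (Sum.inr (Sum.inl x)))
          + ((∑ y ∈ univ.filter (fun y : Σ b : Fin d, Fin (occB d M N b) =>
                f (Sum.inr (Sum.inr (Sum.inl y))) = kk), wt d M N (Sum.inr (Sum.inr (Sum.inl y))))
            + (∑ z ∈ univ.filter (fun z : Σ c : Fin d, Fin (occC d M N c) =>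
                f (Sum.inr (Sum.inr (Sum.inr z))) = kk),
                  wt d M N (Sum.inr (Sum.inr (Sum.inr z)))))) := by
    rw [Finset.sum_filter, Fintype.sum_sum_type, Fintype.sum_sum_type, Fintype.sum_sum_type]
    simp only [← Finset.sum_filter]
  rw [hsplit] at hsum
  set St := univ.filter (fun t : {t : Fin d × Fin d × Fin d // t ∈ M ∪ N} =>
    f (Sum.inl t) = kk) with hStdef
  set Sa := univ.filter (fun x : Σ a : Fin d, Fin (occA d M N a) =>
    f (Sum.inr (Sum.inl x)) = kk) with hSadef
  set Sb := univ.filter (fun y : Σ b : Fin d, Fin (occB d M N b) =>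
    f (Sum.inr (Sum.inr (Sum.inl y))) = kk) with hSbdef
  set Sc := univ.filter (fun z : Σ c : Fin d, Fin (occC d M N c) =>
    f (Sum.inr (Sum.inr (Sum.inr z))) = kk) with hScdef
  -- evaluate each of the four sums
  have hTT : ∑ t ∈ St, wt d M N (Sum.inl t)
      = (St.card : ℤ) * ((bb d M N : ℤ)^5 + (bb d M N : ℤ)^4)
        - (∑ t ∈ St, ((t.1.1 : ℤ) + 1)) * (bb d M N : ℤ)^3
        - (∑ t ∈ St, ((t.1.2.1 : ℤ) + 1)) * (bb d M N : ℤ)^2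
        - (∑ t ∈ St, ((t.1.2.2 : ℤ) + 1)) * (bb d M N : ℤ) := by
    simp only [wt, Finset.sum_sub_distrib, Finset.sum_add_distrib, ← Finset.sum_mul,
      Finset.sum_const, nsmul_eq_mul, mul_one]
    ring
  have hAA : ∑ x ∈ Sa, wt d M N (Sum.inr (Sum.inl x))
      = (Sa.card : ℤ) * ((bb d M N : ℤ)^5 + 2 * (bb d M N : ℤ)^4)
        + (∑ x ∈ Sa, ((x.1 : ℤ) + 1)) * (bb d M N : ℤ)^3
        + (∑ x ∈ Sa, if (x.2 : ℕ) = 0 then (-2:ℤ) else 0) := by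
    simp only [wt, Finset.sum_add_distrib, ← Finset.sum_mul,
      Finset.sum_const, nsmul_eq_mul, mul_one]
    ring
  have hBB : ∑ y ∈ Sb, wt d M N (Sum.inr (Sum.inr (Sum.inl y)))
      = (Sb.card : ℤ) * ((bb d M N : ℤ)^5 + 4 * (bb d M N : ℤ)^4)
        + (∑ y ∈ Sb, ((y.1 : ℤ) + 1)) * (bb d M N : ℤ)^2
        + (∑ y ∈ Sb, if (y.2 : ℕ) = 0 then (1:ℤ) else 0) := by
    simp only [wt, Finset.sum_add_distrib, ← Finset.sum_mul,
      Finset.sum_const, nsmul_eq_mul, mul_one]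
    ring
  have hCC : ∑ z ∈ Sc, wt d M N (Sum.inr (Sum.inr (Sum.inr z)))
      = (Sc.card : ℤ) * ((bb d M N : ℤ)^5 + 8 * (bb d M N : ℤ)^4)
        + (∑ z ∈ Sc, ((z.1 : ℤ) + 1)) * (bb d M N : ℤ)
        + (∑ z ∈ Sc, if (z.2 : ℕ) = 0 then (1:ℤ) else 0) := by
    simp only [wt, Finset.sum_add_distrib, ← Finset.sum_mul,
      Finset.sum_const, nsmul_eq_mul, mul_one]
    ring
  rw [hTT, hAA, hBB, hCC] at hsum
  unfold θ12 at hsum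
  -- names
  set nt := St.card with hntdef
  set na := Sa.card with hnadef
  set nb := Sb.card with hnbdef
  set nc := Sc.card with hncdef
  set u3 := ∑ t ∈ St, ((t.1.1 : ℤ) + 1) with hu3def
  set u2 := ∑ t ∈ St, ((t.1.2.1 : ℤ) + 1) with hu2def
  set u1 := ∑ t ∈ St, ((t.1.2.2 : ℤ) + 1) with hu1def
  set v3 := ∑ x ∈ Sa, ((x.1 : ℤ) + 1) with hv3def
  set v2 := ∑ y ∈ Sb, ((y.1 : ℤ) + 1) with hv2def
  set v1 := ∑ z ∈ Sc, ((z.1 : ℤ) + 1) with hv1def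
  set ea := ∑ x ∈ Sa, if (x.2 : ℕ) = 0 then (-2:ℤ) else 0 with headef
  set eb := ∑ y ∈ Sb, if (y.2 : ℕ) = 0 then (1:ℤ) else 0 with hebdef
  set ec := ∑ z ∈ Sc, if (z.2 : ℕ) = 0 then (1:ℤ) else 0 with hecdef
  have heq0 : ((nt:ℤ) + na + nb + nc - 4) * (bb d M N : ℤ)^5
      + ((nt:ℤ) + 2*na + 4*nb + 8*nc - 15) * (bb d M N : ℤ)^4
      + (v3 - u3) * (bb d M N : ℤ)^3 + (v2 - u2) * (bb d M N : ℤ)^2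
      + (v1 - u1) * (bb d M N : ℤ) + (ea + eb + ec) = 0 := by
    linear_combination hsum
  -- cardinality bounds
  have hnt : nt ≤ M.card + N.card := by
    refine le_trans (le_trans (Finset.card_le_univ St) ?_) (Finset.card_union_le M N)
    rw [Fintype.card_coe]
  have hsigA : Fintype.card (Σ a : Fin d, Fin (occA d M N a)) = (M ∪ N).card := by
    rw [Fintype.card_sigma]
    simp only [Fintype.card_fin]
    unfold occA
    exact (Finset.card_eq_sum_card_fiberwise (f := fun t : Fin d × Fin d × Fin d => t.1)
      (fun t _ => Finset.mem_univ _)).symm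
  have hsigB : Fintype.card (Σ b : Fin d, Fin (occB d M N b)) = (M ∪ N).card := by
    rw [Fintype.card_sigma]
    simp only [Fintype.card_fin]
    unfold occB
    exact (Finset.card_eq_sum_card_fiberwise (f := fun t : Fin d × Fin d × Fin d => t.2.1)
      (fun t _ => Finset.mem_univ _)).symm
  have hsigC : Fintype.card (Σ c : Fin d, Fin (occC d M N c)) = (M ∪ N).card := by
    rw [Fintype.card_sigma]
    simp only [Fintype.card_fin]
    unfold occC
    exact (Finset.card_eq_sum_card_fiberwise (f := fun t : Fin d × Fin d × Fin d => t.2.2)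
      (fun t _ => Finset.mem_univ _)).symm
  have hna : na ≤ M.card + N.card := by
    refine le_trans (le_trans (Finset.card_le_univ Sa) ?_) (Finset.card_union_le M N)
    rw [hsigA]
  have hnb : nb ≤ M.card + N.card := by
    refine le_trans (le_trans (Finset.card_le_univ Sb) ?_) (Finset.card_union_le M N)
    rw [hsigB]
  have hnc : nc ≤ M.card + N.card := by
    refine le_trans (le_trans (Finset.card_le_univ Sc) ?_) (Finset.card_union_le M N)
    rw [hsigC]
  -- digit bounds
  have hcast : ∀ p q : ℕ, p ≤ q → (p:ℤ) ≤ (q:ℤ) := fun p q h => by exact_mod_cast h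
  have hdsum : ∀ {α : Type} (s : Finset α) (g : α → Fin d),
      0 ≤ ∑ i ∈ s, ((g i : ℤ) + 1) ∧ ∑ i ∈ s, ((g i : ℤ) + 1) ≤ (s.card : ℤ) * d := by
    intro α s g
    constructor
    · exact Finset.sum_nonneg (fun i _ => by positivity)
    · calc ∑ i ∈ s, ((g i : ℤ) + 1) ≤ ∑ i ∈ s, (d:ℤ) := by
            refine Finset.sum_le_sum (fun i _ => ?_)
            have := (g i).isLt
            omega
        _ = (s.card : ℤ) * d := by rw [Finset.sum_const, nsmul_eq_mul]
  have hE : ((M.card + N.card : ℕ) : ℤ) * d = (((M.card + N.card) * d : ℕ) : ℤ) := by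
    push_cast; ring
  have hbound : ∀ (w : ℤ) (n : ℕ), 0 ≤ w → w ≤ (n:ℤ) * d → n ≤ M.card + N.card →
      w ≤ (((M.card + N.card) * d : ℕ) : ℤ) := by
    intro w n h0 h1 h2
    refine le_trans h1 (le_trans ?_ (le_of_eq hE))
    exact mul_le_mul_of_nonneg_right (hcast n (M.card + N.card) h2) (by positivity)
  have hu3b := hdsum St (fun t => t.1.1)
  have hu2b := hdsum St (fun t => t.1.2.1)
  have hu1b := hdsum St (fun t => t.1.2.2)
  have hv3b := hdsum Sa (fun x => x.1)
  have hv2b := hdsum Sb (fun y => y.1)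
  have hv1b := hdsum Sc (fun z => z.1)
  have hu3e : u3 ≤ (((M.card + N.card) * d : ℕ) : ℤ) := hbound u3 nt hu3b.1 hu3b.2 hnt
  have hu2e : u2 ≤ (((M.card + N.card) * d : ℕ) : ℤ) := hbound u2 nt hu2b.1 hu2b.2 hnt
  have hu1e : u1 ≤ (((M.card + N.card) * d : ℕ) : ℤ) := hbound u1 nt hu1b.1 hu1b.2 hnt
  have hv3e : v3 ≤ (((M.card + N.card) * d : ℕ) : ℤ) := hbound v3 na hv3b.1 hv3b.2 hna
  have hv2e : v2 ≤ (((M.card + N.card) * d : ℕ) : ℤ) := hbound v2 nb hv2b.1 hv2b.2 hnb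
  have hv1e : v1 ≤ (((M.card + N.card) * d : ℕ) : ℤ) := hbound v1 nc hv1b.1 hv1b.2 hnc
  -- bounds on the unit digits
  have heab : -2 * (na : ℤ) ≤ ea ∧ ea ≤ 0 := by
    constructor
    · calc -2 * (na : ℤ) = ∑ _x ∈ Sa, (-2 : ℤ) := by
            rw [Finset.sum_const, nsmul_eq_mul]; ring
        _ ≤ ea := Finset.sum_le_sum (fun x _ => by split <;> norm_num)
    · exact Finset.sum_nonpos (fun x _ => by split <;> norm_num)
  have hebb : 0 ≤ eb ∧ eb ≤ (nb : ℤ) := by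
    constructor
    · exact Finset.sum_nonneg (fun y _ => by split <;> norm_num)
    · calc eb ≤ ∑ _y ∈ Sb, (1 : ℤ) := Finset.sum_le_sum (fun y _ => by split <;> norm_num)
        _ = (nb : ℤ) := by rw [Finset.sum_const, nsmul_eq_mul]; ring
  have hecb : 0 ≤ ec ∧ ec ≤ (nc : ℤ) := by
    constructor
    · exact Finset.sum_nonneg (fun z _ => by split <;> norm_num)
    · calc ec ≤ ∑ _z ∈ Sc, (1 : ℤ) := Finset.sum_le_sum (fun z _ => by split <;> norm_num)
        _ = (nc : ℤ) := by rw [Finset.sum_const, nsmul_eq_mul]; ring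
  -- absolute-value bounds for the digit lemma
  have hEnn : (0:ℤ) ≤ (((M.card + N.card) * d : ℕ) : ℤ) := Int.natCast_nonneg _
  have habs : ∀ w w' : ℤ, 0 ≤ w → w ≤ (((M.card + N.card) * d : ℕ) : ℤ) → 0 ≤ w' →
      w' ≤ (((M.card + N.card) * d : ℕ) : ℤ) → |w' - w| < (bb d M N : ℤ) := by
    intro w w' h1 h2 h3 h4
    rw [hBe, abs_lt]
    constructor <;> linarith only [h1, h2, h3, h4, hEnn]
  have h3abs : |v3 - u3| < (bb d M N : ℤ) := habs u3 v3 hu3b.1 hu3e hv3b.1 hv3e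
  have h2abs : |v2 - u2| < (bb d M N : ℤ) := habs u2 v2 hu2b.1 hu2e hv2b.1 hv2e
  have h1abs : |v1 - u1| < (bb d M N : ℤ) := habs u1 v1 hu1b.1 hu1e hv1b.1 hv1e
  have h0abs : |ea + eb + ec| < (bb d M N : ℤ) := by
    rw [hBe, abs_lt]
    have hna' : (na : ℤ) ≤ ((M.card + N.card : ℕ) : ℤ) := hcast _ _ hna
    have hnb' : (nb : ℤ) ≤ ((M.card + N.card : ℕ) : ℤ) := hcast _ _ hnb
    have hnc' : (nc : ℤ) ≤ ((M.card + N.card : ℕ) : ℤ) := hcast _ _ hnc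
    have hmE : ((M.card + N.card : ℕ) : ℤ) ≤ (((M.card + N.card) * d : ℕ) : ℤ) :=
      hcast _ _ hme
    constructor <;>
      linarith only [heab.1, heab.2, hebb.1, hebb.2, hecb.1, hecb.2,
        hna', hnb', hnc', hmE, hEnn]
  -- extract digits
  obtain ⟨h54, hc3, hc2, hc1, hc0⟩ :=
    digits12 (bb d M N : ℤ) ((nt:ℤ) + na + nb + nc - 4)
      ((nt:ℤ) + 2*na + 4*nb + 8*nc - 15) (v3 - u3) (v2 - u2) (v1 - u1) (ea + eb + ec)
      hB2 h3abs h2abs h1abs h0abs heq0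
  -- the counting argument
  obtain ⟨hnt1, hna1, hnb1, hnc1⟩ :=
    arith12 (M.card + N.card) ((M.card + N.card) * d) nt na nb nc hnt hna hnb hnc hme
      (by rw [hBe] at h54; linear_combination h54)
  -- the four singletons
  obtain ⟨t0, ht0⟩ := Finset.card_eq_one.mp hnt1
  obtain ⟨xx, hxx⟩ := Finset.card_eq_one.mp hna1
  obtain ⟨yy, hyy⟩ := Finset.card_eq_one.mp hnb1
  obtain ⟨zz, hzz⟩ := Finset.card_eq_one.mp hnc1
  obtain ⟨xa, xj⟩ := xx
  obtain ⟨yb, yj⟩ := yy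
  obtain ⟨zc, zj⟩ := zz
  -- values of the digit sums
  have hu3v : u3 = (t0.1.1 : ℤ) + 1 := by rw [hu3def, ht0, Finset.sum_singleton]
  have hu2v : u2 = (t0.1.2.1 : ℤ) + 1 := by rw [hu2def, ht0, Finset.sum_singleton]
  have hu1v : u1 = (t0.1.2.2 : ℤ) + 1 := by rw [hu1def, ht0, Finset.sum_singleton]
  have hv3v : v3 = (xa : ℤ) + 1 := by rw [hv3def, hxx, Finset.sum_singleton]
  have hv2v : v2 = (yb : ℤ) + 1 := by rw [hv2def, hyy, Finset.sum_singleton]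
  have hv1v : v1 = (zc : ℤ) + 1 := by rw [hv1def, hzz, Finset.sum_singleton]
  rw [hu3v, hv3v] at hc3
  rw [hu2v, hv2v] at hc2
  rw [hu1v, hv1v] at hc1
  have hxaeq : xa = t0.1.1 := Fin.ext (by omega)
  have hybeq : yb = t0.1.2.1 := Fin.ext (by omega)
  have hzceq : zc = t0.1.2.2 := Fin.ext (by omega)
  subst hxaeq; subst hybeq; subst hzceq
  -- memberships
  have ht0mem : t0 ∈ St := by rw [ht0]; exact Finset.mem_singleton_self _
  rw [hStdef] at ht0mem
  have hft0 : f (Sum.inl t0) = kk := (Finset.mem_filter.mp ht0mem).2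
  have hxmem : (⟨t0.1.1, xj⟩ : Σ a : Fin d, Fin (occA d M N a)) ∈ Sa := by
    rw [hxx]; exact Finset.mem_singleton_self _
  rw [hSadef] at hxmem
  have hfx : f (Sum.inr (Sum.inl ⟨t0.1.1, xj⟩)) = kk := (Finset.mem_filter.mp hxmem).2
  have hymem : (⟨t0.1.2.1, yj⟩ : Σ b : Fin d, Fin (occB d M N b)) ∈ Sb := by
    rw [hyy]; exact Finset.mem_singleton_self _
  rw [hSbdef] at hymem
  have hfy : f (Sum.inr (Sum.inr (Sum.inl ⟨t0.1.2.1, yj⟩))) = kk :=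
    (Finset.mem_filter.mp hymem).2
  have hzmem : (⟨t0.1.2.2, zj⟩ : Σ c : Fin d, Fin (occC d M N c)) ∈ Sc := by
    rw [hzz]; exact Finset.mem_singleton_self _
  rw [hScdef] at hzmem
  have hfz : f (Sum.inr (Sum.inr (Sum.inr ⟨t0.1.2.2, zj⟩))) = kk :=
    (Finset.mem_filter.mp hzmem).2
  -- uniqueness
  have uniqT : ∀ t', f (Sum.inl t') = kk → t' = t0 := by
    intro t' h'
    have ht' : t' ∈ St := by
      rw [hStdef]; exact Finset.mem_filter.mpr ⟨Finset.mem_univ _, h'⟩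
    rw [ht0] at ht'
    exact Finset.mem_singleton.mp ht'
  have uniqA : ∀ x, f (Sum.inr (Sum.inl x)) = kk →
      x = (⟨t0.1.1, xj⟩ : Σ a : Fin d, Fin (occA d M N a)) := by
    intro x h'
    have hx' : x ∈ Sa := by
      rw [hSadef]; exact Finset.mem_filter.mpr ⟨Finset.mem_univ _, h'⟩
    rw [hxx] at hx'
    exact Finset.mem_singleton.mp hx'
  have uniqB : ∀ y, f (Sum.inr (Sum.inr (Sum.inl y))) = kk →
      y = (⟨t0.1.2.1, yj⟩ : Σ b : Fin d, Fin (occB d M N b)) := by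
    intro y h'
    have hy' : y ∈ Sb := by
      rw [hSbdef]; exact Finset.mem_filter.mpr ⟨Finset.mem_univ _, h'⟩
    rw [hyy] at hy'
    exact Finset.mem_singleton.mp hy'
  have uniqC : ∀ z, f (Sum.inr (Sum.inr (Sum.inr z))) = kk →
      z = (⟨t0.1.2.2, zj⟩ : Σ c : Fin d, Fin (occC d M N c)) := by
    intro z h'
    have hz' : z ∈ Sc := by
      rw [hScdef]; exact Finset.mem_filter.mpr ⟨Finset.mem_univ _, h'⟩
    rw [hzz] at hz'
    exact Finset.mem_singleton.mp hz'
  -- unit digits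
  have heav : ea = if (xj : ℕ) = 0 then (-2:ℤ) else 0 := by
    rw [headef, hxx, Finset.sum_singleton]
  have hebv : eb = if (yj : ℕ) = 0 then (1:ℤ) else 0 := by
    rw [hebdef, hyy, Finset.sum_singleton]
  have hecv : ec = if (zj : ℕ) = 0 then (1:ℤ) else 0 := by
    rw [hecdef, hzz, Finset.sum_singleton]
  rw [heav, hebv, hecv] at hc0
  refine ⟨t0, xj, yj, zj, hft0, uniqT, hfx, uniqA, hfy, uniqB, hfz, uniqC, ?_⟩
  by_cases hx0 : (xj : ℕ) = 0 <;> by_cases hy0 : (yj : ℕ) = 0 <;>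
    by_cases hz0 : (zj : ℕ) = 0 <;> simp [hx0, hy0, hz0] at hc0 ⊢


/-- in the ∀∃-4-Partition reduction from ∀∃-3DM, any partition of `W`
into subsets each summing to `θ` has every subset consisting of exactly one
triplet-integer `w(a,b,c)` together with exactly one `a`-integer for `a`, one
`b`-integer for `b` and one `c`-integer for `c`, the three element-integers being
all actual or all dummy; moreover each actual element-integer lies in an
all-actual class, and the triplets grouped with their three actual integers form a
(partial) 3-dimensional matching using each element at most once. -/
theorem forallExists_fourPartition_structure
    (d : ℕ) (hd : 0 < d) (M N : Finset (Fin d × Fin d × Fin d))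
    (hdisj : Disjoint M N) {K : Type} (f : Idx12 d M N → K)
    (hpart : ∀ kk ∈ Set.range f,
      ∑ x ∈ univ.filter (fun x => f x = kk), wt d M N x = θ12 d M N) :
    (∀ kk ∈ Set.range f,
      ∃ (t : {t : Fin d × Fin d × Fin d // t ∈ M ∪ N})
        (ja : Fin (occA d M N t.1.1)) (jb : Fin (occB d M N t.1.2.1))
        (jc : Fin (occC d M N t.1.2.2)),
        f (Sum.inl t) = kk ∧ (∀ t', f (Sum.inl t') = kk → t' = t) ∧
        f (Sum.inr (Sum.inl ⟨t.1.1, ja⟩)) = kk ∧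
        (∀ x, f (Sum.inr (Sum.inl x)) = kk → x = ⟨t.1.1, ja⟩) ∧
        f (Sum.inr (Sum.inr (Sum.inl ⟨t.1.2.1, jb⟩))) = kk ∧
        (∀ y, f (Sum.inr (Sum.inr (Sum.inl y))) = kk → y = ⟨t.1.2.1, jb⟩) ∧
        f (Sum.inr (Sum.inr (Sum.inr ⟨t.1.2.2, jc⟩))) = kk ∧
        (∀ z, f (Sum.inr (Sum.inr (Sum.inr z))) = kk → z = ⟨t.1.2.2, jc⟩) ∧
        (((ja : ℕ) = 0 ∧ (jb : ℕ) = 0 ∧ (jc : ℕ) = 0) ∨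
          ((ja : ℕ) ≠ 0 ∧ (jb : ℕ) ≠ 0 ∧ (jc : ℕ) ≠ 0))) ∧
    (∀ (a : Fin d) (h : 0 < occA d M N a),
      AllActual f (f (Sum.inr (Sum.inl ⟨a, ⟨0, h⟩⟩)))) ∧
    (∀ (b : Fin d) (h : 0 < occB d M N b),
      AllActual f (f (Sum.inr (Sum.inr (Sum.inl ⟨b, ⟨0, h⟩⟩))))) ∧
    (∀ (c : Fin d) (h : 0 < occC d M N c),
      AllActual f (f (Sum.inr (Sum.inr (Sum.inr ⟨c, ⟨0, h⟩⟩))))) ∧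
    (∀ t t' : {t : Fin d × Fin d × Fin d // t ∈ M ∪ N},
      AllActual f (f (Sum.inl t)) → AllActual f (f (Sum.inl t')) →
      (t.1.1 = t'.1.1 ∨ t.1.2.1 = t'.1.2.1 ∨ t.1.2.2 = t'.1.2.2) → t = t') := by
  have mainP := class12 d hd M N f hpart
  refine ⟨mainP, ?_, ?_, ?_, ?_⟩
  · -- actual a-integers lie in all-actual classes
    intro a h
    obtain ⟨t, ja, jb, jc, hft, uT, hfx, uA, hfy, uB, hfz, uC, hd2⟩ :=
      mainP _ ⟨Sum.inr (Sum.inl ⟨a, ⟨0, h⟩⟩), rfl⟩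
    have hxeq := uA ⟨a, ⟨0, h⟩⟩ rfl
    have hja0 : (ja : ℕ) = 0 := by
      have := congrArg (fun s : Σ a : Fin d, Fin (occA d M N a) => (s.2 : ℕ)) hxeq
      simpa using this.symm
    have hall : (ja : ℕ) = 0 ∧ (jb : ℕ) = 0 ∧ (jc : ℕ) = 0 := by
      rcases hd2 with h' | h'
      · exact h'
      · exact absurd hja0 h'.1
    refine ⟨?_, ?_, ?_⟩
    · intro x hx
      have := congrArg (fun s : Σ a : Fin d, Fin (occA d M N a) => (s.2 : ℕ)) (uA x hx)
      simpa [hall.1] using this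
    · intro y hy
      have := congrArg (fun s : Σ b : Fin d, Fin (occB d M N b) => (s.2 : ℕ)) (uB y hy)
      simpa [hall.2.1] using this
    · intro z hz
      have := congrArg (fun s : Σ c : Fin d, Fin (occC d M N c) => (s.2 : ℕ)) (uC z hz)
      simpa [hall.2.2] using this
  · -- actual b-integers lie in all-actual classes
    intro b h
    obtain ⟨t, ja, jb, jc, hft, uT, hfx, uA, hfy, uB, hfz, uC, hd2⟩ :=
      mainP _ ⟨Sum.inr (Sum.inr (Sum.inl ⟨b, ⟨0, h⟩⟩)), rfl⟩
    have hyeq := uB ⟨b, ⟨0, h⟩⟩ rfl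
    have hjb0 : (jb : ℕ) = 0 := by
      have := congrArg (fun s : Σ b : Fin d, Fin (occB d M N b) => (s.2 : ℕ)) hyeq
      simpa using this.symm
    have hall : (ja : ℕ) = 0 ∧ (jb : ℕ) = 0 ∧ (jc : ℕ) = 0 := by
      rcases hd2 with h' | h'
      · exact h'
      · exact absurd hjb0 h'.2.1
    refine ⟨?_, ?_, ?_⟩
    · intro x hx
      have := congrArg (fun s : Σ a : Fin d, Fin (occA d M N a) => (s.2 : ℕ)) (uA x hx)
      simpa [hall.1] using this
    · intro y hy
      have := congrArg (fun s : Σ b : Fin d, Fin (occB d M N b) => (s.2 : ℕ)) (uB y hy)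
      simpa [hall.2.1] using this
    · intro z hz
      have := congrArg (fun s : Σ c : Fin d, Fin (occC d M N c) => (s.2 : ℕ)) (uC z hz)
      simpa [hall.2.2] using this
  · -- actual c-integers lie in all-actual classes
    intro c h
    obtain ⟨t, ja, jb, jc, hft, uT, hfx, uA, hfy, uB, hfz, uC, hd2⟩ :=
      mainP _ ⟨Sum.inr (Sum.inr (Sum.inr ⟨c, ⟨0, h⟩⟩)), rfl⟩
    have hzeq := uC ⟨c, ⟨0, h⟩⟩ rfl
    have hjc0 : (jc : ℕ) = 0 := by
      have := congrArg (fun s : Σ c : Fin d, Fin (occC d M N c) => (s.2 : ℕ)) hzeq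
      simpa using this.symm
    have hall : (ja : ℕ) = 0 ∧ (jb : ℕ) = 0 ∧ (jc : ℕ) = 0 := by
      rcases hd2 with h' | h'
      · exact h'
      · exact absurd hjc0 h'.2.2
    refine ⟨?_, ?_, ?_⟩
    · intro x hx
      have := congrArg (fun s : Σ a : Fin d, Fin (occA d M N a) => (s.2 : ℕ)) (uA x hx)
      simpa [hall.1] using this
    · intro y hy
      have := congrArg (fun s : Σ b : Fin d, Fin (occB d M N b) => (s.2 : ℕ)) (uB y hy)
      simpa [hall.2.1] using this
    · intro z hz
      have := congrArg (fun s : Σ c : Fin d, Fin (occC d M N c) => (s.2 : ℕ)) (uC z hz)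
      simpa [hall.2.2] using this
  · -- the induced matching
    intro t t' hAt hAt' hshare
    obtain ⟨s, ja, jb, jc, hft, uT, hfx, uA, hfy, uB, hfz, uC, hd2⟩ :=
      mainP (f (Sum.inl t)) ⟨Sum.inl t, rfl⟩
    have hts : t = s := uT t rfl
    subst hts
    obtain ⟨s', ja', jb', jc', hft', uT', hfx', uA', hfy', uB', hfz', uC', hd2'⟩ :=
      mainP (f (Sum.inl t')) ⟨Sum.inl t', rfl⟩
    have hts' : t' = s' := uT' t' rfl
    subst hts'
    have hja0 : (ja : ℕ) = 0 := hAt.1 _ hfx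
    have hjb0 : (jb : ℕ) = 0 := hAt.2.1 _ hfy
    have hjc0 : (jc : ℕ) = 0 := hAt.2.2 _ hfz
    have hja0' : (ja' : ℕ) = 0 := hAt'.1 _ hfx'
    have hjb0' : (jb' : ℕ) = 0 := hAt'.2.1 _ hfy'
    have hjc0' : (jc' : ℕ) = 0 := hAt'.2.2 _ hfz'
    rcases hshare with hsh | hsh | hsh
    · have key : (⟨t.1.1, ja⟩ : Σ a : Fin d, Fin (occA d M N a)) = ⟨t'.1.1, ja'⟩ :=
        sigEq12 _ _ _ hsh (by rw [hja0, hja0'])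
      have hkk : f (Sum.inl t) = f (Sum.inl t') := by rw [← hfx, ← hfx', key]
      exact uT' t hkk
    · have key : (⟨t.1.2.1, jb⟩ : Σ b : Fin d, Fin (occB d M N b)) = ⟨t'.1.2.1, jb'⟩ :=
        sigEq12 _ _ _ hsh (by rw [hjb0, hjb0'])
      have hkk : f (Sum.inl t) = f (Sum.inl t') := by rw [← hfy, ← hfy', key]
      exact uT' t hkk
    · have key : (⟨t.1.2.2, jc⟩ : Σ c : Fin d, Fin (occC d M N c)) = ⟨t'.1.2.2, jc'⟩ :=
        sigEq12 _ _ _ hsh (by rw [hjc0, hjc0'])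
      have hkk : f (Sum.inl t) = f (Sum.inl t') := by rw [← hfz, ← hfz', key]
      exact uT' t hkk
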